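/- Let a_{n,k} be defined by the recurrence a_{n,k} = a_{n,k−1} + (2n+k−1)·a_{n−1,k} for n ≥ 1, 1 ≤ k ≤ n, with a_{n,0} = (2n−1)!! and a_{k−1,k} = 0. Then a_{n,1} = (2n+1)!! − (2n)!! for all n ≥ 1. -/

import Mathlib

open Nat

/-- If `a` satisfies `a n k = a n (k-1) + (2n+k-1) * a (n-1) k` for `1 ≤ k ≤ n`,
with `a n 0 = (2n-1)!!` and `a (k-1) k = 0`, then `a n 1 = (2n+1)!! - (2n)!!`. -/
theorem stmt1 (a : ℕ → ℕ → ℕ)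
    (ha0 : ∀ n, a n 0 = (2 * n - 1)‼)
    (haz : ∀ k, 1 ≤ k → a (k - 1) k = 0)
    (harec : ∀ n k, 1 ≤ n → 1 ≤ k → k ≤ n →
      a n k = a n (k - 1) + (2 * n + k - 1) * a (n - 1) k) :
    ∀ n, 1 ≤ n → (a n 1 : ℤ) = ((2 * n + 1)‼ : ℤ) - ((2 * n)‼ : ℤ) := by
  intro n hn
  induction n with
  | zero => omega
  | succ m ih =>
    rcases Nat.eq_zero_or_pos m with rfl | hm
    · have h0 : a 0 1 = 0 := haz 1 le_rfl
      have := harec 1 1 le_rfl le_rfl le_rfl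
      simp [h0, ha0] at this
      simp [this]

    · have hrec := harec (m + 1) 1 (by omega) le_rfl (by omega)
      have hih := ih hm
      have h0 : a (m + 1) 0 = (2 * m + 1)‼ := by
        have := ha0 (m + 1); simpa [show 2 * (m + 1) - 1 = 2 * m + 1 by omega] using this
      have hsimp : a (m + 1 - 1) 1 = a m 1 := rfl
      have key : (a (m + 1) 1 : ℤ) = (2 * m + 1)‼ + (2 * m + 2) * (a m 1) := by
        rw [hrec]; push_cast [h0, hsimp]; ring_nf
      rw [key, hih]
      have h1 : (2 * (m + 1) + 1)‼ = (2 * m + 3) * (2 * m + 1)‼ := by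
        have := Nat.doubleFactorial_add_two (2 * m + 1)
        rw [show (2 * m + 3) = 2 * m + 1 + 2 by omega, show 2 * (m + 1) + 1 = 2 * m + 1 + 2 by omega]; exact this
      have h2 : (2 * (m + 1))‼ = (2 * m + 2) * (2 * m)‼ := by
        have := Nat.doubleFactorial_add_two (2 * m)
        rw [show 2 * (m + 1) = 2 * m + 2 by omega]; exact this
      push_cast [h1, h2]
      ring
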